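/- Let h : ℝ → ℝ be a differentiable function defined on all of ℝ satisfying h'(t) ≤ k - h(t)² for all t, where k > 0. Then |h(t)| ≤ √k for all t ∈ ℝ. -/

import Mathlib

open Filter Set Topology

/-- Auxiliary: the upper bound `h t ≤ √k`. -/
lemma riccati_upper (k : ℝ) (hk : 0 < k) (h : ℝ → ℝ)
    (hdiff : Differentiable ℝ h)
    (hineq : ∀ t : ℝ, deriv h t ≤ k - (h t) ^ 2) :
    ∀ t : ℝ, h t ≤ Real.sqrt k := by
  intro t₀
  by_contra hc
  push_neg at hc
  set s := Real.sqrt k with hsdef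
  have hs : 0 < s := Real.sqrt_pos.mpr hk
  have hks : s ^ 2 = k := Real.sq_sqrt hk.le
  -- Step 1: for all t ≤ t₀, h t₀ ≤ h t.
  have step1 : ∀ t ≤ t₀, h t₀ ≤ h t := by
    intro t₁ ht₁
    by_contra hlt
    push_neg at hlt
    have ht₁lt : t₁ < t₀ := lt_of_le_of_ne ht₁ (by rintro rfl; exact absurd rfl hlt.ne)
    set B : Set ℝ := Set.Icc t₁ t₀ ∩ h ⁻¹' (Set.Ici (h t₀)) with hB
    have hBne : B.Nonempty := ⟨t₀, ⟨ht₁, le_rfl⟩, Set.mem_preimage.mpr (Set.mem_Ici.mpr le_rfl)⟩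
    have hBbdd : BddBelow B := ⟨t₁, fun x hx => hx.1.1⟩
    have hBclosed : IsClosed B :=
      (isClosed_Icc).inter (isClosed_Ici.preimage hdiff.continuous)
    set t₂ := sInf B with ht₂def
    have ht₂B : t₂ ∈ B := hBclosed.csInf_mem hBne hBbdd
    have ht₁t₂ : t₁ < t₂ := by
      have hle : t₁ ≤ t₂ := le_csInf hBne fun x hx => hx.1.1
      rcases lt_or_eq_of_le hle with h' | h'
      · exact h'
      · exfalso; have := ht₂B.2; rw [← h'] at this; exact absurd this (not_le.mpr hlt)
    have hIoo : ∀ t ∈ Set.Ioo t₁ t₂, h t < h t₀ := by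
      intro t ht
      by_contra hge
      push_neg at hge
      have : t ∈ B := ⟨⟨ht.1.le, ht.2.le.trans ht₂B.1.2⟩, hge⟩
      exact absurd (csInf_le hBbdd this) (not_le.mpr ht.2)
    have hmem : Set.Ioo t₁ t₂ ∈ 𝓝[<] t₂ := Ioo_mem_nhdsLT ht₁t₂
    have ht₂eq : h t₂ = h t₀ := by
      refine le_antisymm ?_ ht₂B.2
      have htend : Tendsto h (𝓝[<] t₂) (𝓝 (h t₂)) :=
        (hdiff.continuous.continuousAt).continuousWithinAt.tendsto
      exact le_of_tendsto htend (eventually_of_mem hmem fun t ht => (hIoo t ht).le)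
    -- derivative at t₂ is nonneg (left slopes are nonneg)
    have hslope : Tendsto (slope h t₂) (𝓝[<] t₂) (𝓝 (deriv h t₂)) := by
      have := hasDerivAt_iff_tendsto_slope.mp (hdiff t₂).hasDerivAt
      exact this.mono_left (nhdsWithin_mono _ fun x hx => ne_of_lt hx)
    have hge0 : 0 ≤ deriv h t₂ := by
      refine ge_of_tendsto hslope (eventually_of_mem hmem fun t ht => ?_)
      have h1 : h t - h t₂ ≤ 0 := by rw [ht₂eq]; linarith [hIoo t ht]
      have h2 : t - t₂ ≤ 0 := by linarith [ht.2]
      simpa [slope_def_field, div_eq_mul_inv] using div_nonneg_of_nonpos h1 h2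
    have hlt0 : deriv h t₂ < 0 := by
      have := hineq t₂
      rw [ht₂eq] at this
      nlinarith [hc, hs]
    linarith
  -- Step 2: the function F t = (h t - s)⁻¹ - t is monotone on Iic t₀.
  have hpos : ∀ t ≤ t₀, 0 < h t - s := fun t ht => by linarith [step1 t ht, hc]
  set F : ℝ → ℝ := fun t => (h t - s)⁻¹ - t with hF
  have hdF : ∀ x ≤ t₀, HasDerivAt F (-(deriv h x) / (h x - s) ^ 2 - 1) x := by
    intro x hx
    have h1 : HasDerivAt (fun t => h t - s) (deriv h x) x :=
      (hdiff x).hasDerivAt.sub_const s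
    have h2 := h1.inv (hpos x hx).ne'
    exact h2.sub (hasDerivAt_id x)
  have hmono : MonotoneOn F (Set.Iic t₀) := by
    apply monotoneOn_of_deriv_nonneg (convex_Iic t₀)
    · exact fun x hx => ((hdF x hx).continuousAt).continuousWithinAt
    · intro x hx
      rw [interior_Iic] at hx
      exact ((hdF x hx.le).differentiableAt).differentiableWithinAt
    · intro x hx
      rw [interior_Iic] at hx
      rw [(hdF x hx.le).deriv]
      have hu : 0 < h x - s := hpos x hx.le
      have hd : deriv h x ≤ -(h x - s) ^ 2 := by nlinarith [hineq x]
      have : (1 : ℝ) ≤ -(deriv h x) / (h x - s) ^ 2 := by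
        rw [le_div_iff₀ (by positivity)]
        nlinarith
      linarith
  -- derive the contradiction
  set t₁ := t₀ - (h t₀ - s)⁻¹ - 1 with ht₁
  have hinv0 : 0 < (h t₀ - s)⁻¹ := inv_pos.mpr (hpos t₀ le_rfl)
  have ht₁le : t₁ ≤ t₀ := by dsimp [t₁]; linarith
  have hFle : F t₁ ≤ F t₀ := hmono ht₁le (le_refl t₀ : t₀ ∈ Set.Iic t₀) ht₁le
  have hinv1 : 0 < (h t₁ - s)⁻¹ := inv_pos.mpr (hpos t₁ ht₁le)
  simp only [hF] at hFle
  dsimp [t₁] at hFle hinv1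
  linarith

/-- Riccati comparison: a globally defined differentiable function `h : ℝ → ℝ`
satisfying `h'(t) ≤ k - h(t)^2` with `k > 0` is bounded by `√k` in absolute value. -/
theorem riccati_global_bound (k : ℝ) (hk : 0 < k) (h : ℝ → ℝ)
    (hdiff : Differentiable ℝ h)
    (hineq : ∀ t : ℝ, deriv h t ≤ k - (h t) ^ 2) :
    ∀ t : ℝ, |h t| ≤ Real.sqrt k := by
  intro t
  rw [abs_le]
  constructor
  · -- lower bound via g x = -h (-x)
    set g : ℝ → ℝ := fun x => -h (-x) with hg
    have hgdiff : Differentiable ℝ g :=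
      (hdiff.comp differentiable_neg).neg
    have hgderiv : ∀ x, deriv g x = deriv h (-x) := by
      intro x
      have h1 : HasDerivAt (fun x : ℝ => h (-x)) (deriv h (-x) * (-1)) x :=
        (hdiff (-x)).hasDerivAt.comp x (hasDerivAt_neg x)
      have h2 : HasDerivAt g (deriv h (-x)) x := by
        exact h1.neg.congr_deriv (by ring)
      exact h2.deriv
    have hgineq : ∀ x, deriv g x ≤ k - (g x) ^ 2 := by
      intro x
      rw [hgderiv x]
      have := hineq (-x)
      simp only [hg]
      calc deriv h (-x) ≤ k - h (-x) ^ 2 := this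
        _ = k - (-h (-x)) ^ 2 := by ring
    have := riccati_upper k hk g hgdiff hgineq (-t)
    simp only [hg, neg_neg] at this
    linarith
  · exact riccati_upper k hk h hdiff hineq t
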